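/- Let 𝒞 ⊆ 𝕄 be a nonzero sum-rank metric code and let r ∈ [dim(𝒞)]. Let j ∈ [t] and 0 ≤ δ ≤ n_j − 1 be such that d_r(𝒞) − 1 ≥ n_1 + ... + n_{j−1} + δ. Then dim(𝒞) ≤ Σ_{i=j}^t m_i n_i − m_j δ + r − 1. -/

import Mathlib

open Module Matrix

variable {F : Type*} [Field F] [Fintype F] {t : ℕ} {m n : Fin t → ℕ}

/-- The sum-rank weight of an element of `𝕄 = F^{m 0 × n 0} × ⋯ × F^{m (t-1) × n (t-1)}`. -/
noncomputable def srk (C : ∀ i : Fin t, Matrix (Fin (m i)) (Fin (n i)) F) : ℕ :=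
  ∑ i, (C i).rank

/-- The maximum sum-rank of a code. -/
noncomputable def maxsrk (𝒞 : Submodule F (∀ i : Fin t, Matrix (Fin (m i)) (Fin (n i)) F)) : ℕ :=
  sSup {w | ∃ C ∈ 𝒞, srk C = w}

/-- The minimum distance of a code. -/
noncomputable def minDist (𝒞 : Submodule F (∀ i : Fin t, Matrix (Fin (m i)) (Fin (n i)) F)) : ℕ :=
  sInf {w | ∃ C ∈ 𝒞, C ≠ 0 ∧ srk C = w}

/-- The maximum rank of a subspace of a matrix space. -/
noncomputable def maxrank {a b : ℕ} (𝒜 : Submodule F (Matrix (Fin a) (Fin b) F)) : ℕ :=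
  sSup {w | ∃ A ∈ 𝒜, A.rank = w}

/-- Optimal anticodes in a single matrix space. -/
def IsOptAnticode {a b : ℕ} (𝒜 : Submodule F (Matrix (Fin a) (Fin b) F)) : Prop :=
  Module.finrank F 𝒜 = a * maxrank 𝒜

/-- The weight of a sum-rank metric code: the minimum of `maxsrk` over products of
optimal anticodes containing it. -/
noncomputable def codeWt (𝒞 : Submodule F (∀ i : Fin t, Matrix (Fin (m i)) (Fin (n i)) F)) : ℕ :=
  sInf {w | ∃ 𝒜 : ∀ i : Fin t, Submodule F (Matrix (Fin (m i)) (Fin (n i)) F),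
    (∀ i, IsOptAnticode (𝒜 i)) ∧ 𝒞 ≤ Submodule.pi Set.univ 𝒜 ∧
      maxsrk (Submodule.pi Set.univ 𝒜) = w}

/-- The `r`-th generalized sum-rank weight of a code. -/
noncomputable def gw (𝒞 : Submodule F (∀ i : Fin t, Matrix (Fin (m i)) (Fin (n i)) F))
    (r : ℕ) : ℕ :=
  sInf {w | ∃ 𝒟 : Submodule F (∀ i : Fin t, Matrix (Fin (m i)) (Fin (n i)) F),
    𝒟 ≤ 𝒞 ∧ r ≤ Module.finrank F 𝒟 ∧ codeWt 𝒟 = w}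



/-- Matrices supported on the first `δ` columns. -/
def colSupp (F : Type*) [Field F] (a b δ : ℕ) : Submodule F (Matrix (Fin a) (Fin b) F) where
  carrier := {A | ∀ (x : Fin a) (y : Fin b), δ ≤ (y : ℕ) → A x y = 0}
  add_mem' := by intro A B hA hB x y hy; simp [hA x y hy, hB x y hy]
  zero_mem' := by intro x y hy; simp
  smul_mem' := by intro c A hA x y hy; simp [hA x y hy]

lemma aux_rank_le {a b δ : ℕ} (A : Matrix (Fin a) (Fin b) F)
    (h : ∀ (x : Fin a) (y : Fin b), δ ≤ (y : ℕ) → A x y = 0) : A.rank ≤ δ := by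
  rcases le_or_gt b δ with hb | hb
  · exact A.rank_le_width.trans hb
  have hδb : δ ≤ b := hb.le
  have hBC : (Matrix.of fun (x : Fin a) (i : Fin δ) => A x (Fin.castLE hδb i)) *
      (Matrix.of fun (i : Fin δ) (y : Fin b) => if (i : ℕ) = (y : ℕ) then (1 : F) else 0) = A := by
    ext x y
    simp only [Matrix.mul_apply, Matrix.of_apply]
    rcases lt_or_ge (y : ℕ) δ with hy | hy
    · rw [Finset.sum_eq_single (⟨(y : ℕ), hy⟩ : Fin δ)]
      · simp [Fin.ext_iff]
      · intro i _ hi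
        rw [if_neg, mul_zero]
        exact fun hc => hi (Fin.ext hc)
      · simp
    · rw [Finset.sum_eq_zero, eq_comm]
      · exact h x y hy
      intro i _
      rw [if_neg, mul_zero]
      omega
  rw [← hBC]
  exact (rank_mul_le_left _ _).trans
    ((Matrix.rank_le_card_width _).trans (by simp))

lemma aux_rank_J {a b δ : ℕ} (hδb : δ ≤ b) (hba : b ≤ a) :
    (Matrix.of fun (x : Fin a) (y : Fin b) =>
      if (x : ℕ) = (y : ℕ) ∧ (y : ℕ) < δ then (1 : F) else 0).rank = δ := by
  set J : Matrix (Fin a) (Fin b) F := Matrix.of fun (x : Fin a) (y : Fin b) =>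
      if (x : ℕ) = (y : ℕ) ∧ (y : ℕ) < δ then (1 : F) else 0 with hJ
  have hδa : δ ≤ a := hδb.trans hba
  refine le_antisymm (aux_rank_le _ ?_) ?_
  · intro x y hy
    rw [hJ]
    simp only [Matrix.of_apply]
    rw [if_neg]
    omega
  · set P : Matrix (Fin δ) (Fin a) F :=
      Matrix.of fun (k : Fin δ) (x : Fin a) => if (k : ℕ) = (x : ℕ) then (1 : F) else 0 with hP
    set Q : Matrix (Fin b) (Fin δ) F :=
      Matrix.of fun (y : Fin b) (l : Fin δ) => if (y : ℕ) = (l : ℕ) then (1 : F) else 0 with hQ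
    have key : P * J * Q = (1 : Matrix (Fin δ) (Fin δ) F) := by
      have hPJ : ∀ (k : Fin δ) (y : Fin b),
          (P * J) k y = if (k : ℕ) = (y : ℕ) ∧ (y : ℕ) < δ then (1 : F) else 0 := by
        intro k y
        rw [Matrix.mul_apply, Finset.sum_eq_single (Fin.castLE hδa k)]
        · simp [hP, hJ]
        · intro x _ hx
          rw [hP]
          simp only [Matrix.of_apply]
          rw [if_neg, zero_mul]
          exact fun hc => hx (by simp [Fin.ext_iff]; omega)
        · simp
      ext k l
      rw [Matrix.mul_apply, Finset.sum_eq_single (Fin.castLE hδb l)]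
      · rw [hPJ, hQ]
        simp only [Matrix.of_apply, Fin.coe_castLE, Matrix.one_apply, Fin.ext_iff]
        have hl : (l : ℕ) < δ := l.2
        by_cases hkl : (k : ℕ) = (l : ℕ) <;> simp [hkl, hl]
      · intro y _ hy
        rw [hQ]
        simp only [Matrix.of_apply]
        rw [if_neg, mul_zero]
        exact fun hc => hy (by simp [Fin.ext_iff]; omega)
      · simp
    have h1 : ((P * J) * Q).rank = δ := by
      rw [key]
      simpa using Matrix.rank_one (n := Fin δ) (R := F)
    calc δ = ((P * J) * Q).rank := h1.symm
      _ ≤ (P * J).rank := rank_mul_le_left _ _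
      _ ≤ J.rank := rank_mul_le_right _ _

lemma mem_colSupp {a b δ : ℕ} {A : Matrix (Fin a) (Fin b) F} :
    A ∈ colSupp F a b δ ↔ ∀ (x : Fin a) (y : Fin b), δ ≤ (y : ℕ) → A x y = 0 := Iff.rfl

lemma colSupp_top {a b : ℕ} : colSupp F a b b = ⊤ := by
  ext A
  simp only [Submodule.mem_top, iff_true, mem_colSupp]
  intro x y hy
  exact absurd y.2 (by omega)

/-- The extension-by-zero linear map. -/
def extMap (F : Type*) [Field F] (a b δ : ℕ) (hδb : δ ≤ b) :
    Matrix (Fin a) (Fin δ) F →ₗ[F] Matrix (Fin a) (Fin b) F where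
  toFun B := Matrix.of fun x y => if h : (y : ℕ) < δ then B x ⟨(y : ℕ), h⟩ else 0
  map_add' B C := by
    ext x y
    simp only [Matrix.of_apply, Matrix.add_apply]
    split <;> simp
  map_smul' c B := by
    ext x y
    simp only [Matrix.of_apply, Matrix.smul_apply, RingHom.id_apply]
    split <;> simp

lemma extMap_inj {a b δ : ℕ} (hδb : δ ≤ b) : Function.Injective (extMap F a b δ hδb) := by
  intro B C h
  ext x y
  have := congrFun (congrFun h x) (Fin.castLE hδb y)
  simpa [extMap, y.2] using this

lemma range_extMap {a b δ : ℕ} (hδb : δ ≤ b) :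
    LinearMap.range (extMap F a b δ hδb) = colSupp F a b δ := by
  ext A
  constructor
  · rintro ⟨B, rfl⟩ x y hy
    simp only [extMap, LinearMap.coe_mk, AddHom.coe_mk, Matrix.of_apply]
    rw [dif_neg (by omega)]
  · intro hA
    refine ⟨Matrix.of fun x i => A x (Fin.castLE hδb i), ?_⟩
    ext x y
    by_cases h : (y : ℕ) < δ
    · simp [extMap, h, Fin.ext_iff]
    · simp only [extMap, LinearMap.coe_mk, AddHom.coe_mk, Matrix.of_apply, dif_neg h]
      exact (hA x y (by omega)).symm

lemma finrank_colSupp {a b δ : ℕ} (hδb : δ ≤ b) :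
    Module.finrank F (colSupp F a b δ) = a * δ := by
  rw [← range_extMap hδb, LinearMap.finrank_range_of_inj (extMap_inj hδb)]
  simp [Module.finrank_matrix]


lemma maxrank_colSupp {a b δ : ℕ} (hδb : δ ≤ b) (hba : b ≤ a) :
    maxrank (colSupp F a b δ) = δ := by
  have hJmem : (Matrix.of fun (x : Fin a) (y : Fin b) =>
      if (x : ℕ) = (y : ℕ) ∧ (y : ℕ) < δ then (1 : F) else 0) ∈ colSupp F a b δ := by
    intro x y hy
    simp only [Matrix.of_apply]
    rw [if_neg]
    omega
  refine le_antisymm ?_ ?_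
  · refine csSup_le ⟨δ, _, hJmem, aux_rank_J hδb hba⟩ ?_
    rintro w ⟨A, hA, rfl⟩
    exact aux_rank_le A hA
  · refine le_csSup ⟨δ, ?_⟩ ⟨_, hJmem, aux_rank_J hδb hba⟩
    rintro w ⟨A, hA, rfl⟩
    exact aux_rank_le A hA

lemma isOpt_colSupp {a b δ : ℕ} (hδb : δ ≤ b) (hba : b ≤ a) :
    IsOptAnticode (colSupp F a b δ) := by
  rw [IsOptAnticode, maxrank_colSupp hδb hba, finrank_colSupp hδb]

lemma isOpt_top {a b : ℕ} (hba : b ≤ a) :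
    IsOptAnticode (⊤ : Submodule F (Matrix (Fin a) (Fin b) F)) := by
  rw [← colSupp_top]
  exact isOpt_colSupp le_rfl hba

lemma maxrank_bot {a b : ℕ} :
    maxrank (⊥ : Submodule F (Matrix (Fin a) (Fin b) F)) = 0 := by
  refine le_antisymm ?_ (Nat.zero_le _)
  refine csSup_le ⟨0, 0, Submodule.zero_mem _, Matrix.rank_zero⟩ ?_
  rintro w ⟨A, hA, rfl⟩
  rw [Submodule.mem_bot] at hA
  subst hA
  simp [Matrix.rank_zero]

lemma isOpt_bot {a b : ℕ} :
    IsOptAnticode (⊥ : Submodule F (Matrix (Fin a) (Fin b) F)) := by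
  rw [IsOptAnticode, maxrank_bot, Nat.mul_zero, finrank_bot]

/-- **Singleton Bound.** Let `𝒞 ⊆ 𝕄` be a nonzero sum-rank metric code, `r ∈ [dim 𝒞]`,
`j ∈ [t]` and `0 ≤ δ ≤ n j - 1` with `d_r(𝒞) - 1 ≥ n_1 + ⋯ + n_{j-1} + δ`. Then
`dim 𝒞 ≤ ∑_{i=j}^t m i * n i - m j * δ + r - 1`. -/
theorem singleton_bound (ht : 0 < t)
    (hm_mono : ∀ i j : Fin t, i ≤ j → m j ≤ m i)
    (hn_pos : ∀ i, 0 < n i) (hmn : ∀ i, n i ≤ m i)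
    (𝒞 : Submodule F (∀ i : Fin t, Matrix (Fin (m i)) (Fin (n i)) F)) (h𝒞 : 𝒞 ≠ ⊥)
    (r : ℕ) (hr1 : 1 ≤ r) (hr2 : r ≤ Module.finrank F 𝒞)
    (j : Fin t) (δ : ℕ) (hδ : δ + 1 ≤ n j)
    (hd : ∑ i ∈ Finset.Iio j, n i + δ + 1 ≤ gw 𝒞 r) :
    Module.finrank F 𝒞 + m j * δ + 1 ≤ ∑ i ∈ Finset.Ici j, m i * n i + r 
    := by
  classical
  have hδb : δ ≤ n j := by omega
  -- the projection map
  set π : (∀ i : Fin t, Matrix (Fin (m i)) (Fin (n i)) F) →ₗ[F]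
      (Matrix (Fin (m j)) (Fin (n j - δ)) F ×
       ∀ i : {i : Fin t // j < i}, Matrix (Fin (m i.1)) (Fin (n i.1)) F) :=
    { toFun := fun C => (Matrix.of fun x y => C j x ⟨δ + (y : ℕ), by omega⟩, fun i => C i.1),
      map_add' := fun C D => rfl,
      map_smul' := fun c C => rfl } with hπ
  set φ := π ∘ₗ 𝒞.subtype with hφ
  have hrn : Module.finrank F (LinearMap.range φ) + Module.finrank F (LinearMap.ker φ)
      = Module.finrank F 𝒞 := LinearMap.finrank_range_add_finrank_ker φ
  -- bound on the range
  have hrange : Module.finrank F (LinearMap.range φ)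
      ≤ m j * (n j - δ) + ∑ i ∈ Finset.Ioi j, m i * n i := by
    have h1 := (LinearMap.range φ).finrank_le
    have h2 : Module.finrank F (Matrix (Fin (m j)) (Fin (n j - δ)) F ×
        ∀ i : {i : Fin t // j < i}, Matrix (Fin (m i.1)) (Fin (n i.1)) F)
        = m j * (n j - δ) + ∑ i ∈ Finset.Ioi j, m i * n i := by
      rw [Module.finrank_prod, Module.finrank_pi_fintype, Module.finrank_matrix]
      congr 1
      · simp
      · calc ∑ i : {i : Fin t // j < i}, finrank F (Matrix (Fin (m i.1)) (Fin (n i.1)) F)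
            = ∑ i : {i : Fin t // j < i}, m i.1 * n i.1 :=
              Finset.sum_congr rfl fun i _ => by simp [Module.finrank_matrix]
          _ = ∑ i ∈ Finset.Ioi j, m i * n i :=
              (Finset.sum_subtype (Finset.Ioi j) (fun i => Finset.mem_Ioi)
                (fun i => m i * n i)).symm
    omega
  -- bound on the kernel
  have hker : Module.finrank F (LinearMap.ker φ) + 1 ≤ r := by
    by_contra hcon
    push_neg at hcon
    have hker_r : r ≤ Module.finrank F (LinearMap.ker φ) := by omega
    set 𝒟 := (LinearMap.ker φ).map 𝒞.subtype with h𝒟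
    have h𝒟rk : Module.finrank F 𝒟 = Module.finrank F (LinearMap.ker φ) :=
      Submodule.finrank_map_subtype_eq 𝒞 _
    -- the anticodes
    set 𝒜 : ∀ i : Fin t, Submodule F (Matrix (Fin (m i)) (Fin (n i)) F) := fun i =>
      if i < j then ⊤ else if i = j then colSupp F (m i) (n i) δ else ⊥ with h𝒜
    have hopt : ∀ i, IsOptAnticode (𝒜 i) := by
      intro i
      simp only [h𝒜]
      rcases lt_trichotomy i j with h | h | h
      · rw [if_pos h]; exact isOpt_top (hmn i)
      · rw [if_neg (by omega), if_pos h]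
        exact isOpt_colSupp (by rw [h]; omega) (hmn i)
      · rw [if_neg (by omega), if_neg (by omega)]; exact isOpt_bot
    have hle : 𝒟 ≤ Submodule.pi Set.univ 𝒜 := by
      rintro C ⟨c, hc, rfl⟩
      have hc0 : π (𝒞.subtype c) = 0 := hc
      have hc1 := congrArg Prod.fst hc0
      have hc2 := congrArg Prod.snd hc0
      simp only [hπ, LinearMap.coe_mk, AddHom.coe_mk, Submodule.coe_subtype] at hc1 hc2
      intro i _
      simp only [h𝒜]
      rcases lt_trichotomy i j with h | h | h
      · rw [if_pos h]; trivial
      · rw [if_neg (by omega), if_pos h]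
        intro x y hy
        subst h
        have hlt : (y : ℕ) - δ < n i - δ := by omega
        have := congrFun (congrFun hc1 x) ⟨(y : ℕ) - δ, hlt⟩
        simp only [Matrix.of_apply, Prod.fst_zero, Matrix.zero_apply] at this
        have e : y = ⟨δ + ((y : ℕ) - δ), by omega⟩ := Fin.ext (Nat.add_sub_of_le hy).symm
        have h2 : (c : ∀ k : Fin t, Matrix (Fin (m k)) (Fin (n k)) F) i x y
            = (c : ∀ k : Fin t, Matrix (Fin (m k)) (Fin (n k)) F) i x
              ⟨δ + ((y : ℕ) - δ), by omega⟩ := congrArg _ e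
        exact h2.trans this
      · rw [if_neg (by omega), if_neg (by omega)]
        have := congrFun hc2 ⟨i, h⟩
        exact this
    have hmax : maxsrk (Submodule.pi Set.univ 𝒜) ≤ ∑ i ∈ Finset.Iio j, n i + δ := by
      refine csSup_le ⟨0, 0, Submodule.zero_mem _, by simp [srk]⟩ ?_
      rintro w ⟨C, hC, rfl⟩
      have huniv : (Finset.univ : Finset (Fin t)) = Finset.Iio j ∪ Finset.Ici j := by
        ext i
        simp only [Finset.mem_univ, Finset.mem_union, Finset.mem_Iio, Finset.mem_Ici, true_iff]
        exact lt_or_ge i j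
      have hdisj : Disjoint (Finset.Iio j) (Finset.Ici j) := by
        simp [Finset.disjoint_left]
      rw [srk, huniv, Finset.sum_union hdisj, Finset.Ici_eq_cons_Ioi, Finset.sum_cons]
      have hIio : ∑ i ∈ Finset.Iio j, (C i).rank ≤ ∑ i ∈ Finset.Iio j, n i :=
        Finset.sum_le_sum fun i _ => (C i).rank_le_width
      have hj : (C j).rank ≤ δ := by
        have := hC j (Set.mem_univ j)
        simp only [h𝒜, if_neg (lt_irrefl j), if_pos rfl] at this
        exact aux_rank_le _ this
      have hIoi : ∑ i ∈ Finset.Ioi j, (C i).rank = 0 := by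
        refine Finset.sum_eq_zero fun i hi => ?_
        rw [Finset.mem_Ioi] at hi
        have := hC i (Set.mem_univ i)
        simp only [h𝒜] at this
        rw [if_neg (by omega), if_neg (by omega)] at this
        have hzero : C i = 0 := by simpa using this
        rw [hzero, Matrix.rank_zero]
      omega
    have hcode : codeWt 𝒟 ≤ ∑ i ∈ Finset.Iio j, n i + δ := by
      refine le_trans (Nat.sInf_le ⟨𝒜, hopt, hle, rfl⟩) hmax
    have hgw : gw 𝒞 r ≤ codeWt 𝒟 :=
      Nat.sInf_le ⟨𝒟, Submodule.map_subtype_le _ _, by omega, rfl⟩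
    omega
  -- conclusion
  have hIci : ∑ i ∈ Finset.Ici j, m i * n i = m j * n j + ∑ i ∈ Finset.Ioi j, m i * n i := by
    rw [Finset.Ici_eq_cons_Ioi, Finset.sum_cons]
  have hsplit : m j * (n j - δ) + m j * δ = m j * n j := by
    rw [← Nat.mul_add, Nat.sub_add_cancel hδb]
  omega
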